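/- Let g₁, g₂ be positive integers with g₂/2 < g₁ < g₂ and let S be a numerical semigroup. Then E(S) = {g₁, g₂} if and only if S is maximal (with respect to inclusion) among numerical semigroups disjoint from {g₁, g₂}, and g₂ − g₁ ∉ S. -/
import Mathlib


/-- A numerical semigroup: subset of ℕ closed under addition, containing 0, cofinite. -/
def IsNumericalSemigroup (S : Set ℕ) : Prop :=
  0 ∈ S ∧ (∀ a b, a ∈ S → b ∈ S → a + b ∈ S) ∧ Sᶜ.Finite

/-- The set of special gaps E(S). -/
def specialGaps (S : Set ℕ) : Set ℕ :=
  {x | x ∉ S ∧ 2 * x ∈ S ∧ ∀ s ∈ S, s ≠ 0 → x + s ∈ S}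

/-- `F` is the Frobenius number of `S`: the greatest natural number not in `S`. -/
def IsFrobenius (S : Set ℕ) (F : ℕ) : Prop :=
  F ∉ S ∧ ∀ m : ℕ, m ∉ S → m ≤ F

/-- Irreducible numerical semigroup. -/
def IsIrreducibleNS (S : Set ℕ) : Prop :=
  IsNumericalSemigroup S ∧ ∀ S₁ S₂ : Set ℕ, IsNumericalSemigroup S₁ →
    IsNumericalSemigroup S₂ → S = S₁ ∩ S₂ → S = S₁ ∨ S = S₂

/-- Atomic numerical semigroup. -/
def IsAtomicNS (S : Set ℕ) : Prop :=
  IsNumericalSemigroup S ∧ ∀ (F : ℕ) (S₁ S₂ : Set ℕ), IsFrobenius S F →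
    IsNumericalSemigroup S₁ → IsNumericalSemigroup S₂ →
    IsFrobenius S₁ F → IsFrobenius S₂ F → S = S₁ ∩ S₂ → S = S₁ ∨ S = S₂

/-- Pseudo-Frobenius numbers of `S`, as integers. -/
def pseudoFrob (S : Set ℕ) : Set ℤ :=
  {x | x ∉ (fun n : ℕ => (n : ℤ)) '' S ∧
    ∀ s ∈ S, s ≠ 0 → x + (s : ℤ) ∈ (fun n : ℕ => (n : ℤ)) '' S}

/-- The semigroup C(F): 0 together with all naturals greater than F/2, except F. -/
def NSC (F : ℕ) : Set ℕ := insert 0 ({n : ℕ | F / 2 < n} \ {F})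

/-- `x` is a minimal generator of `S`. -/
def IsMinGen (S : Set ℕ) (x : ℕ) : Prop :=
  x ∈ S ∧ x ≠ 0 ∧ ∀ a b, a ∈ S → b ∈ S → a ≠ 0 → b ≠ 0 → a + b ≠ x

/-- Adjoining a special gap yields a numerical semigroup. -/
lemma sg_insert {S : Set ℕ} (hS : IsNumericalSemigroup S) {x : ℕ} (hx : x ∈ specialGaps S) :
    IsNumericalSemigroup (insert x S) := by
  obtain ⟨hxS, h2x, hadd⟩ := hx
  refine ⟨Or.inr hS.1, ?_, ?_⟩
  · intro a b ha hb
    rcases ha with rfl | ha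
    · rcases hb with rfl | hb
      · exact Or.inr (by rwa [← two_mul])
      · rcases eq_or_ne b 0 with rfl | hb0
        · simp
        · exact Or.inr (hadd b hb hb0)
    · rcases hb with rfl | hb
      · rcases eq_or_ne a 0 with rfl | ha0
        · simp
        · exact Or.inr (by rw [add_comm]; exact hadd a ha ha0)
      · exact Or.inr (hS.2.1 a b ha hb)
  · exact hS.2.2.subset (Set.compl_subset_compl.mpr (Set.subset_insert x S))

/-- If `S ⊊ T` are numerical semigroups, the largest element of `T \ S` is a special gap. -/
lemma exists_max_specialGap {S T : Set ℕ} (hS : IsNumericalSemigroup S)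
    (hT : IsNumericalSemigroup T) (hsub : S ⊆ T) (hne : S ≠ T) :
    ∃ x ∈ specialGaps S, x ∈ T ∧ ∀ y ∈ T, y ∉ S → y ≤ x := by
  have hDfin : (T \ S).Finite := hS.2.2.subset (fun y hy => hy.2)
  have hDne : (T \ S).Nonempty := by
    rcases Set.exists_of_ssubset (hsub.ssubset_of_ne hne) with ⟨y, hyT, hyS⟩
    exact ⟨y, hyT, hyS⟩
  have hDfne : hDfin.toFinset.Nonempty := hDfin.toFinset_nonempty.mpr hDne
  set x := hDfin.toFinset.max' hDfne with hxdef
  have hxD : x ∈ T \ S := hDfin.mem_toFinset.mp (hDfin.toFinset.max'_mem hDfne)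
  have hmax : ∀ y ∈ T, y ∉ S → y ≤ x := fun y hyT hyS =>
    hDfin.toFinset.le_max' y (hDfin.mem_toFinset.mpr ⟨hyT, hyS⟩)
  have hx0 : x ≠ 0 := fun h => hxD.2 (h ▸ hS.1)
  refine ⟨x, ⟨hxD.2, ?_, ?_⟩, hxD.1, hmax⟩
  · have h2T : 2 * x ∈ T := by have := hT.2.1 x x hxD.1 hxD.1; rwa [← two_mul] at this
    by_contra h2S
    have := hmax _ h2T h2S
    omega
  · intro s hsS hs0
    have hxsT : x + s ∈ T := hT.2.1 x s hxD.1 (hsub hsS)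
    by_contra hxsS
    have := hmax _ hxsT hxsS
    omega

theorem stmt11 (g₁ g₂ : ℕ) (h0 : 0 < g₁) (h1 : g₂ < 2 * g₁) (h2 : g₁ < g₂)
    (S : Set ℕ) (hS : IsNumericalSemigroup S) :
    specialGaps S = {g₁, g₂} ↔
    (g₁ ∉ S ∧ g₂ ∉ S ∧
      (∀ T : Set ℕ, IsNumericalSemigroup T → g₁ ∉ T → g₂ ∉ T → S ⊆ T → S = T) ∧
      g₂ - g₁ ∉ S) := by
  constructor
  · intro hE
    have hg1 : g₁ ∈ specialGaps S := by rw [hE]; exact Or.inl rfl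
    have hg2 : g₂ ∈ specialGaps S := by rw [hE]; exact Or.inr rfl
    refine ⟨hg1.1, hg2.1, ?_, ?_⟩
    · intro T hT hg1T hg2T hsub
      by_contra hne
      obtain ⟨x, hxE, hxT, -⟩ := exists_max_specialGap hS hT hsub hne
      rw [hE] at hxE
      rcases hxE with rfl | rfl
      · exact hg1T hxT
      · exact hg2T hxT
    · intro hd
      have hd0 : g₂ - g₁ ≠ 0 := by omega
      have hmem : g₁ + (g₂ - g₁) ∈ S := hg1.2.2 _ hd hd0
      have heq : g₁ + (g₂ - g₁) = g₂ := by omega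
      exact hg2.1 (heq ▸ hmem)
  · rintro ⟨hg1S, hg2S, hmax, hdS⟩
    -- E(S) ⊆ {g₁, g₂}
    have hEsub : specialGaps S ⊆ {g₁, g₂} := by
      intro x hx
      by_contra hxg
      simp only [Set.mem_insert_iff, Set.mem_singleton_iff, not_or] at hxg
      have hT := sg_insert hS hx
      have h1T : g₁ ∉ insert x S := by
        rintro (rfl | h) <;> [exact hxg.1 rfl; exact hg1S h]
      have h2T : g₂ ∉ insert x S := by
        rintro (rfl | h) <;> [exact hxg.2 rfl; exact hg2S h]
      have := hmax _ hT h1T h2T (Set.subset_insert x S)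
      exact hx.1 (this ▸ Set.mem_insert x S)
    -- the Frobenius number is g₂
    have hUniv : IsNumericalSemigroup (Set.univ : Set ℕ) :=
      ⟨trivial, fun _ _ _ _ => trivial, by simp⟩
    have hSne : S ≠ Set.univ := fun h => hg2S (h ▸ trivial)
    obtain ⟨F, hFE, -, hFmax⟩ :=
      exists_max_specialGap hS hUniv (Set.subset_univ S) hSne
    have hFbound : ∀ y, y ∉ S → y ≤ F := fun y hy => hFmax y trivial hy
    have hg2F : g₂ ≤ F := hFbound _ hg2S
    have hFg : F = g₂ := by
      rcases hEsub hFE with h | h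
      · omega
      · exact h
    -- g₁ is a special gap
    have hg1E : g₁ ∈ specialGaps S := by
      refine ⟨hg1S, ?_, ?_⟩
      · by_contra h
        have := hFbound _ h
        omega
      · -- suppose some s gives g₁ + s ∉ S; take the maximal one
        by_contra hbad
        push_neg at hbad
        obtain ⟨s₀, hs₀S, hs₀0, hs₀⟩ := hbad
        set A : Set ℕ := {s | s ∈ S ∧ s ≠ 0 ∧ g₁ + s ∉ S} with hAdef
        have hAfin : A.Finite := by
          apply (Set.finite_Iic g₂).subset
          intro s hs
          have := hFbound _ hs.2.2
          simp only [Set.mem_Iic]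
          omega
        have hAne : hAfin.toFinset.Nonempty :=
          hAfin.toFinset_nonempty.mpr ⟨s₀, hs₀S, hs₀0, hs₀⟩
        set s := hAfin.toFinset.max' hAne with hsdef
        have hsA : s ∈ A := hAfin.mem_toFinset.mp (hAfin.toFinset.max'_mem hAne)
        have hsmax : ∀ t ∈ A, t ≤ s := fun t ht =>
          hAfin.toFinset.le_max' t (hAfin.mem_toFinset.mpr ht)
        have hxE : g₁ + s ∈ specialGaps S := by
          refine ⟨hsA.2.2, ?_, ?_⟩
          · by_contra h
            have := hFbound _ h
            have hs1 : 0 < s := Nat.pos_of_ne_zero hsA.2.1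
            omega
          · intro t htS ht0
            have hstS : s + t ∈ S := hS.2.1 s t hsA.1 htS
            have hst0 : s + t ≠ 0 := by
              intro h; exact ht0 (by omega)
            by_contra hc
            have hstA : s + t ∈ A := ⟨hstS, hst0, by rwa [add_assoc] at hc⟩
            have := hsmax _ hstA
            omega
        rcases hEsub hxE with h | h
        · have : s = 0 := by omega
          exact hsA.2.1 this
        · simp only [Set.mem_singleton_iff] at h
          have : s = g₂ - g₁ := by omega
          exact hdS (this ▸ hsA.1)
    -- g₂ is a special gap
    have hg2E : g₂ ∈ specialGaps S := hFg ▸ hFE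
    apply Set.Subset.antisymm hEsub
    rintro x (rfl | rfl)
    · exact hg1E
    · exact hg2E
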